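/- For every integer p ≥ 1 and every real x, the higher order Fubini polynomial is the image of the higher order Bell polynomial of order p−1 under the linear operator L on polynomials determined by L((x)_m) = m!·x^m (where (x)_m = x(x−1)⋯(x−m+1) is the falling factorial): explicitly, writing B_n^{p−1}(x) = Σ_{m=0}^n c_{n,m}·(x)_m in the falling factorial basis, one has F_n^p(x) = Σ_{m=0}^n c_{n,m}·m!·x^m; equivalently, since B_n^{p−1}(x) = Σ_{m=0}^n S^p_{n,m}·(x)_m, the coefficients of B_n^{p−1} in the falling factorial basis are exactly S^p_{n,m}. -/

import Mathlib

/-- Stirling numbers of the second kind. -/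
def S2 : ℕ → ℕ → ℕ
  | 0, 0 => 1
  | 0, _ + 1 => 0
  | _ + 1, 0 => 0
  | n + 1, m + 1 => (m + 1) * S2 n (m + 1) + S2 n m

/-- Entries `S^p_{n,m}` of the `p`-th power of the Stirling matrix (for `p ≥ 1`;
the value at `p = 0` is junk). -/
def Sp : ℕ → ℕ → ℕ → ℕ
  | 0, _, _ => 0
  | 1, n, m => S2 n m
  | p + 2, n, m => ∑ k ∈ Finset.range (n + 1), S2 n k * Sp (p + 1) k m

lemma S2_eq_zero : ∀ {n m : ℕ}, n < m → S2 n m = 0 := by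
  intro n
  induction n with
  | zero => intro m h; cases m with
    | zero => omega
    | succ m => rfl
  | succ n ih =>
    intro m h
    cases m with
    | zero => omega
    | succ m =>
      show (m + 1) * S2 n (m + 1) + S2 n m = 0
      rw [ih (by omega), ih (by omega)]
      simp

lemma Sp_succ (p n m : ℕ) (hp : 1 ≤ p) :
    Sp (p + 1) n m = ∑ k ∈ Finset.range (n + 1), S2 n k * Sp p k m := by
  obtain ⟨q, rfl⟩ := Nat.exists_eq_add_of_le' hp
  rfl

lemma Sp_eq_zero (p : ℕ) (hp : 1 ≤ p) : ∀ {n m : ℕ}, n < m → Sp p n m = 0 := by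
  induction p with
  | zero => omega
  | succ p ih =>
    intro n m h
    rcases Nat.eq_or_lt_of_le hp with h1 | h1
    · rw [← h1]; exact S2_eq_zero h
    · rw [Sp_succ p n m (by omega)]
      apply Finset.sum_eq_zero
      intro k hk
      rw [ih (by omega) (by simp at hk; omega)]
      simp

lemma desc_succ_eval (m : ℕ) (x : ℝ) :
    (descPochhammer ℝ (m + 1)).eval x = (descPochhammer ℝ m).eval x * (x - m) := by
  rw [descPochhammer_succ_right]; simp

lemma stirling_id (n : ℕ) (x : ℝ) :
    x ^ n = ∑ m ∈ Finset.range (n + 1), (S2 n m : ℝ) * (descPochhammer ℝ m).eval x := by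
  induction n with
  | zero => simp [S2]
  | succ n ih =>
    rw [Finset.sum_range_succ' _ (n + 1)]
    have h0 : (S2 (n + 1) 0 : ℝ) = 0 := by norm_num [S2]
    rw [h0, zero_mul, add_zero]
    have hrec : ∀ m ∈ Finset.range (n + 1),
        (S2 (n + 1) (m + 1) : ℝ) * (descPochhammer ℝ (m + 1)).eval x
        = ((m : ℝ) + 1) * S2 n (m + 1) * (descPochhammer ℝ (m + 1)).eval x
          + (S2 n m : ℝ) * (descPochhammer ℝ (m + 1)).eval x := by
      intro m _
      have : (S2 (n + 1) (m + 1) : ℝ) = ((m : ℝ) + 1) * S2 n (m + 1) + S2 n m := by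
        show ((((m + 1) * S2 n (m + 1) + S2 n m : ℕ)) : ℝ) = _
        push_cast; ring
      rw [this]; ring
    rw [Finset.sum_congr rfl hrec, Finset.sum_add_distrib]
    have hA : ∑ m ∈ Finset.range (n + 1),
        ((m : ℝ) + 1) * S2 n (m + 1) * (descPochhammer ℝ (m + 1)).eval x
        = ∑ m ∈ Finset.range (n + 1), (m : ℝ) * S2 n m * (descPochhammer ℝ m).eval x := by
      have e0 := Finset.sum_range_succ'
        (fun m => (m : ℝ) * S2 n m * (descPochhammer ℝ m).eval x) (n + 1)
      rw [Finset.sum_range_succ] at e0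
      rw [S2_eq_zero (Nat.lt_succ_self n)] at e0
      simp only [Nat.cast_add, Nat.cast_one, Nat.cast_zero, Nat.cast_ofNat] at e0
      simpa using e0.symm
    rw [hA, ← Finset.sum_add_distrib]
    have : ∀ m ∈ Finset.range (n + 1),
        (m : ℝ) * S2 n m * (descPochhammer ℝ m).eval x
          + (S2 n m : ℝ) * (descPochhammer ℝ (m + 1)).eval x
        = x * ((S2 n m : ℝ) * (descPochhammer ℝ m).eval x) := by
      intro m _
      rw [desc_succ_eval]; ring
    rw [Finset.sum_congr rfl this, ← Finset.mul_sum, ← ih]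
    ring

lemma Sp_comm (p : ℕ) (hp : 1 ≤ p) (n m : ℕ) :
    ∑ k ∈ Finset.range (n + 1), Sp p n k * S2 k m
      = ∑ k ∈ Finset.range (n + 1), S2 n k * Sp p k m := by
  induction p generalizing n m with
  | zero => omega
  | succ p ih =>
    rcases Nat.eq_or_lt_of_le hp with h1 | h1
    · have hp0 : p = 0 := by omega
      subst hp0; rfl
    · have hp' : 1 ≤ p := by omega
      calc ∑ k ∈ Finset.range (n + 1), Sp (p + 1) n k * S2 k m
          = ∑ k ∈ Finset.range (n + 1), ∑ j ∈ Finset.range (n + 1),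
              S2 n j * Sp p j k * S2 k m := by
            apply Finset.sum_congr rfl; intro k _
            rw [Sp_succ p n k hp', Finset.sum_mul]
        _ = ∑ j ∈ Finset.range (n + 1), ∑ k ∈ Finset.range (n + 1),
              S2 n j * Sp p j k * S2 k m := Finset.sum_comm
        _ = ∑ j ∈ Finset.range (n + 1), S2 n j *
              ∑ k ∈ Finset.range (n + 1), Sp p j k * S2 k m := by
            apply Finset.sum_congr rfl; intro j _
            rw [Finset.mul_sum]
            apply Finset.sum_congr rfl; intro k _; ring
        _ = ∑ j ∈ Finset.range (n + 1), S2 n j *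
              ∑ k ∈ Finset.range (n + 1), S2 j k * Sp p k m := by
            apply Finset.sum_congr rfl; intro j hj
            simp only [Finset.mem_range] at hj
            congr 1
            have e1 : ∑ k ∈ Finset.range (n + 1), Sp p j k * S2 k m
                = ∑ k ∈ Finset.range (j + 1), Sp p j k * S2 k m := by
              refine (Finset.sum_subset (fun k hk => ?_) (fun k _ hk => ?_)).symm
              · simp only [Finset.mem_range] at *; omega
              · simp only [Finset.mem_range, not_lt] at hk
                rw [Sp_eq_zero p hp' (by omega)]; simp
            have e2 : ∑ k ∈ Finset.range (n + 1), S2 j k * Sp p k m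
                = ∑ k ∈ Finset.range (j + 1), S2 j k * Sp p k m := by
              refine (Finset.sum_subset (fun k hk => ?_) (fun k _ hk => ?_)).symm
              · simp only [Finset.mem_range] at *; omega
              · simp only [Finset.mem_range, not_lt] at hk
                rw [S2_eq_zero (by omega)]; simp
            rw [e1, e2, ih hp']
        _ = ∑ k ∈ Finset.range (n + 1), S2 n k * Sp (p + 1) k m := by
            apply Finset.sum_congr rfl; intro k hk
            simp only [Finset.mem_range] at hk
            rw [Sp_succ p k m hp']
            congr 1
            refine (Finset.sum_subset (fun j hj => ?_) (fun j _ hj => ?_)).symm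
            · simp only [Finset.mem_range] at *; omega
            · simp only [Finset.mem_range, not_lt] at hj
              rw [S2_eq_zero (by omega)]; simp

lemma coeff_unique (N : ℕ) (a : ℕ → ℝ)
    (h : ∀ x : ℝ, ∑ m ∈ Finset.range N, a m * (descPochhammer ℝ m).eval x = 0) :
    ∀ m, m < N → a m = 0 := by
  intro m
  induction m using Nat.strong_induction_on with
  | _ m ih =>
    intro hm
    have hx := h (m : ℝ)
    have hsum : ∑ k ∈ Finset.range N, a k * ((descPochhammer ℝ k).eval (m : ℝ))
        = a m * (m.factorial : ℝ) := by
      rw [Finset.sum_eq_single m]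
      · rw [descPochhammer_eval_eq_descFactorial, Nat.descFactorial_self]
      · intro k hk hne
        simp only [Finset.mem_range] at hk
        rcases lt_or_gt_of_ne hne with hlt | hgt
        · rw [ih k hlt (by omega)]; ring
        · rw [descPochhammer_eval_eq_descFactorial,
            Nat.descFactorial_eq_zero_iff_lt.mpr hgt]
          simp
      · intro h'; exact absurd (Finset.mem_range.mpr hm) h'
    rw [hsum] at hx
    have : (m.factorial : ℝ) ≠ 0 := by positivity
    exact (mul_eq_zero.mp hx).resolve_right this

/-- Higher order Bell polynomials: `B_n^0(x) = x^n`, `B_n^p(x) = ∑_{m=0}^n S^p_{n,m} x^m`. -/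
noncomputable def BellP : ℕ → ℕ → ℝ → ℝ
  | 0, n, x => x ^ n
  | p + 1, n, x => ∑ m ∈ Finset.range (n + 1), (Sp (p + 1) n m : ℝ) * x ^ m

/-- Higher order Fubini polynomials: `F_n^p(x) = ∑_{m=0}^n S^p_{n,m} m! x^m`. -/
noncomputable def FubPoly (p n : ℕ) (x : ℝ) : ℝ :=
  ∑ m ∈ Finset.range (n + 1), (Sp p n m : ℝ) * m.factorial * x ^ m

lemma bell_eq (p : ℕ) (hp : 1 ≤ p) (n : ℕ) (x : ℝ) :
    BellP (p - 1) n x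
      = ∑ m ∈ Finset.range (n + 1), (Sp p n m : ℝ) * (descPochhammer ℝ m).eval x := by
  rcases Nat.eq_or_lt_of_le hp with h1 | h1
  · have : p = 1 := h1.symm
    subst this
    show x ^ n = _
    rw [stirling_id n x]
    rfl
  · obtain ⟨q, rfl⟩ : ∃ q, p = q + 2 := ⟨p - 2, by omega⟩
    show (∑ k ∈ Finset.range (n + 1), (Sp (q + 1) n k : ℝ) * x ^ k) = _
    calc ∑ k ∈ Finset.range (n + 1), (Sp (q + 1) n k : ℝ) * x ^ k
        = ∑ k ∈ Finset.range (n + 1), ∑ m ∈ Finset.range (n + 1),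
            (Sp (q + 1) n k : ℝ) * S2 k m * (descPochhammer ℝ m).eval x := by
          apply Finset.sum_congr rfl; intro k hk
          simp only [Finset.mem_range] at hk
          have hx : x ^ k = ∑ m ∈ Finset.range (n + 1),
              (S2 k m : ℝ) * (descPochhammer ℝ m).eval x := by
            rw [stirling_id k x]
            refine Finset.sum_subset (fun m hm => ?_) (fun m _ hm => ?_)
            · simp only [Finset.mem_range] at *; omega
            · simp only [Finset.mem_range, not_lt] at hm
              rw [S2_eq_zero (by omega)]; simp
          rw [hx, Finset.mul_sum]
          apply Finset.sum_congr rfl; intro m _; ring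
      _ = ∑ m ∈ Finset.range (n + 1), ∑ k ∈ Finset.range (n + 1),
            (Sp (q + 1) n k : ℝ) * S2 k m * (descPochhammer ℝ m).eval x := Finset.sum_comm
      _ = ∑ m ∈ Finset.range (n + 1), (Sp (q + 2) n m : ℝ) * (descPochhammer ℝ m).eval x := by
          apply Finset.sum_congr rfl; intro m _
          have key : (∑ k ∈ Finset.range (n + 1), Sp (q + 1) n k * S2 k m : ℕ)
              = Sp (q + 2) n m := by
            rw [Sp_comm (q + 1) (by omega) n m]
            rfl
          rw [← key]
          push_cast
          rw [Finset.sum_mul]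

/-- If `B_n^{p-1}(x) = ∑_{m=0}^n c_m (x)_m` in the falling factorial basis, then the
coefficients are exactly `S^p_{n,m}` and `F_n^p(x) = ∑_{m=0}^n c_m m! x^m`; i.e. `F_n^p`
is the image of `B_n^{p-1}` under the linear operator `L` with `L((x)_m) = m! x^m`. -/
theorem fubini_is_L_of_bell (p : ℕ) (hp : 1 ≤ p) (n : ℕ) (c : ℕ → ℝ)
    (hc : ∀ x : ℝ,
      BellP (p - 1) n x = ∑ m ∈ Finset.range (n + 1), c m * (descPochhammer ℝ m).eval x) :
    (∀ m ≤ n, c m = (Sp p n m : ℝ)) ∧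
      ∀ x : ℝ, FubPoly p n x = ∑ m ∈ Finset.range (n + 1), c m * m.factorial * x ^ m := by
  have key : ∀ m ≤ n, c m = (Sp p n m : ℝ) := by
    have hz : ∀ x : ℝ, ∑ m ∈ Finset.range (n + 1),
        (c m - (Sp p n m : ℝ)) * (descPochhammer ℝ m).eval x = 0 := by
      intro x
      have h1 := hc x
      have h2 := bell_eq p hp n x
      rw [h1] at h2
      have : ∑ m ∈ Finset.range (n + 1),
          (c m - (Sp p n m : ℝ)) * (descPochhammer ℝ m).eval x
          = (∑ m ∈ Finset.range (n + 1), c m * (descPochhammer ℝ m).eval x)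
            - ∑ m ∈ Finset.range (n + 1), (Sp p n m : ℝ) * (descPochhammer ℝ m).eval x := by
        rw [← Finset.sum_sub_distrib]
        apply Finset.sum_congr rfl; intro m _; ring
      rw [this, h2]
      ring
    intro m hm
    have := coeff_unique (n + 1) (fun m => c m - (Sp p n m : ℝ)) hz m (by omega)
    replace this : c m - (Sp p n m : ℝ) = 0 := this
    linarith
  refine ⟨key, fun x => ?_⟩
  unfold FubPoly
  apply Finset.sum_congr rfl
  intro m hm
  simp only [Finset.mem_range] at hm
  rw [key m (by omega)]
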